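/- Let U be a noncyclic subgroup of ℚ (of rank one) such that U is not p-divisible for any prime p (no prime occurs with infinite multiplicity in its supernatural number). Then for every integer l > 1, the quotient U/lU is cyclic of order l. -/

import Mathlib

lemma twogen (u w : ℚ) : ∃ g : ℚ, g ∈ AddSubgroup.closure ({u, w} : Set ℚ) ∧
    (∃ a : ℤ, u = a • g) ∧ ∃ b : ℤ, w = b • g := by
  set m : ℤ := u.num * w.den with hm
  set n : ℤ := w.num * u.den with hn
  set d : ℚ := (u.den : ℚ) * (w.den : ℚ) with hd
  have hd0 : d ≠ 0 := by simp [hd, u.den_nz, w.den_nz]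
  have hu : u = (m : ℚ) / d := by
    rw [hm, hd]; push_cast
    rw [mul_div_mul_right _ _ (by exact_mod_cast w.den_nz : (w.den:ℚ) ≠ 0)]
    exact (Rat.num_div_den u).symm
  have hw : w = (n : ℚ) / d := by
    rw [hn, hd]; push_cast
    rw [mul_comm (u.den:ℚ) (w.den:ℚ),
      mul_div_mul_right _ _ (by exact_mod_cast u.den_nz : (u.den:ℚ) ≠ 0)]
    exact (Rat.num_div_den w).symm
  rcases eq_or_ne (Int.gcd m n) 0 with h0 | h0
  · rw [Int.gcd_eq_zero_iff] at h0
    exact ⟨0, AddSubgroup.zero_mem _, ⟨0, by simp [hu, h0.1]⟩, ⟨0, by simp [hw, h0.2]⟩⟩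
  · refine ⟨(Int.gcd m n : ℚ) / d, ?_, ?_, ?_⟩
    · have hbez := Int.gcd_eq_gcd_ab m n
      have hbezQ : ((Int.gcd m n : ℤ) : ℚ) = (m:ℚ) * (m.gcdA n : ℚ) + (n:ℚ) * (m.gcdB n : ℚ) := by
        exact_mod_cast congrArg (Int.cast : ℤ → ℚ) hbez
      have heq : (Int.gcd m n : ℚ) / d = (m.gcdA n) • u + (m.gcdB n) • w := by
        rw [hu, hw, zsmul_eq_mul, zsmul_eq_mul]
        rw [show ((Int.gcd m n : ℕ) : ℚ) = ((Int.gcd m n : ℤ) : ℚ) by push_cast; ring, hbezQ]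
        ring
      rw [heq]
      have hu' : u ∈ AddSubgroup.closure ({u, w} : Set ℚ) :=
        AddSubgroup.subset_closure (by simp)
      have hw' : w ∈ AddSubgroup.closure ({u, w} : Set ℚ) :=
        AddSubgroup.subset_closure (by simp)
      exact AddSubgroup.add_mem _ (AddSubgroup.zsmul_mem _ hu' _)
        (AddSubgroup.zsmul_mem _ hw' _)
    · obtain ⟨a, ha⟩ : ((Int.gcd m n : ℤ)) ∣ m := Int.gcd_dvd_left m n
      have haQ : (m:ℚ) = ((Int.gcd m n : ℕ) : ℚ) * a := by exact_mod_cast congrArg (Int.cast : ℤ → ℚ) ha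
      exact ⟨a, by rw [hu, haQ, zsmul_eq_mul]; ring⟩
    · obtain ⟨b, hb⟩ : ((Int.gcd m n : ℤ)) ∣ n := Int.gcd_dvd_right m n
      have hbQ : (n:ℚ) = ((Int.gcd m n : ℕ) : ℚ) * b := by exact_mod_cast congrArg (Int.cast : ℤ → ℚ) hb
      exact ⟨b, by rw [hw, hbQ, zsmul_eq_mul]; ring⟩

lemma mem_mulmap (U : AddSubgroup ℚ) (c u : ℚ) :
    u ∈ U.map (AddMonoidHom.mulLeft c) ↔ ∃ v ∈ U, c * v = u := by
  simp [AddSubgroup.mem_map]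

lemma exists_good (U : AddSubgroup ℚ)
    (hdiv : ∀ p : ℕ, p.Prime → U.map (AddMonoidHom.mulLeft (p : ℚ)) ≠ U)
    (S : Finset ℕ) (hS : ∀ p ∈ S, p.Prime) :
    ∃ u ∈ U, ∀ p ∈ S, u ∉ U.map (AddMonoidHom.mulLeft (p : ℚ)) := by
  classical
  induction S using Finset.induction with
  | empty => exact ⟨0, U.zero_mem, by simp⟩
  | @insert q S hq ih =>
    obtain ⟨u, huU, hu⟩ := ih (fun p hp => hS p (Finset.mem_insert_of_mem hp))
    have hqp : q.Prime := hS q (Finset.mem_insert_self q S)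
    -- find w ∈ U \ qU
    have hle : U.map (AddMonoidHom.mulLeft (q : ℚ)) ≤ U := by
      intro x hx
      rw [mem_mulmap] at hx
      obtain ⟨v, hv, rfl⟩ := hx
      have : (q : ℚ) * v = q • v := by push_cast [nsmul_eq_mul]; ring
      rw [this]
      exact U.nsmul_mem hv q
    obtain ⟨w, hwU, hw⟩ : ∃ w ∈ U, w ∉ U.map (AddMonoidHom.mulLeft (q : ℚ)) := by
      by_contra h
      push_neg at h
      exact hdiv q hqp (le_antisymm hle h)
    obtain ⟨g, hgcl, ⟨a, ha⟩, ⟨b, hb⟩⟩ := twogen u w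
    have hgU : g ∈ U := by
      have : AddSubgroup.closure ({u, w} : Set ℚ) ≤ U := by
        rw [AddSubgroup.closure_le]
        intro x hx
        rcases hx with rfl | rfl
        · exact huU
        · exact hwU
      exact this hgcl
    refine ⟨g, hgU, ?_⟩
    intro p hp hmem
    rw [mem_mulmap] at hmem
    obtain ⟨v, hvU, hv⟩ := hmem
    rcases Finset.mem_insert.1 hp with rfl | hp'
    · apply hw
      rw [mem_mulmap]
      exact ⟨b • v, U.zsmul_mem hvU b, by rw [hb, ← hv, zsmul_eq_mul, zsmul_eq_mul]; ring⟩
    · apply hu p hp'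
      rw [mem_mulmap]
      exact ⟨a • v, U.zsmul_mem hvU a, by rw [ha, ← hv, zsmul_eq_mul, zsmul_eq_mul]; ring⟩

-- key divisibility lemma
lemma key_dvd (U : AddSubgroup ℚ) (l : ℕ) (hl : 1 < l) (u : ℚ) (huU : u ∈ U)
    (hgood : ∀ p : ℕ, p.Prime → p ∣ l → u ∉ U.map (AddMonoidHom.mulLeft (p : ℚ)))
    (m : ℤ) (v : ℚ) (hvU : v ∈ U) (h : (m : ℚ) * u = (l : ℚ) * v) :
    (l : ℤ) ∣ m := by
  set d : ℕ := Int.gcd m l with hd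
  have hl0 : (l : ℤ) ≠ 0 := by positivity
  have hd0 : 0 < Int.gcd m (l : ℤ) := Int.gcd_pos_of_ne_zero_right m hl0
  have hcop : Int.gcd (m / (d:ℤ)) ((l:ℤ) / (d:ℤ)) = 1 := Int.gcd_div_gcd_div_gcd hd0
  obtain ⟨m', hm'⟩ : ((d:ℤ)) ∣ m := Int.gcd_dvd_left m l
  obtain ⟨l', hl'⟩ : ((d:ℤ)) ∣ (l:ℤ) := Int.gcd_dvd_right m l
  have hm'' : m / (d:ℤ) = m' := by rw [hm']; exact Int.mul_ediv_cancel_left _ (by exact_mod_cast hd0.ne')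
  have hl'' : (l:ℤ) / (d:ℤ) = l' := by rw [hl']; exact Int.mul_ediv_cancel_left _ (by exact_mod_cast hd0.ne')
  rw [hm'', hl''] at hcop
  have hl'pos : 0 < l' := by
    rcases lt_trichotomy l' 0 with h1 | h1 | h1
    · nlinarith [hd0, (by exact_mod_cast Nat.cast_pos.2 (by positivity : 0 < l) : (0:ℤ) < l), hl'.symm.le, mul_nonpos_of_nonneg_of_nonpos (by exact_mod_cast hd0.le : (0:ℤ) ≤ d) h1.le]
    · exfalso; rw [h1, mul_zero] at hl'; exact hl0 hl'
    · exact h1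
  -- divide the equation by d
  have heq' : (m' : ℚ) * u = (l' : ℚ) * v := by
    have hdQ : ((d:ℤ):ℚ) ≠ 0 := by exact_mod_cast hd0.ne'
    have : ((d:ℤ):ℚ) * ((m':ℚ) * u) = ((d:ℤ):ℚ) * ((l':ℚ) * v) := by
      have h1 : (m:ℚ) = ((d:ℤ):ℚ) * m' := by exact_mod_cast congrArg (Int.cast : ℤ → ℚ) hm'
      have h2 : ((l:ℤ):ℚ) = ((d:ℤ):ℚ) * l' := by exact_mod_cast congrArg (Int.cast : ℤ → ℚ) hl'
      push_cast at h1 h2 ⊢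
      rw [show ((d:ℚ)) * ((m':ℚ) * u) = ((d:ℚ) * m') * u by ring, ← h1,
        show ((d:ℚ)) * ((l':ℚ) * v) = ((d:ℚ) * l') * v by ring, ← h2]
      exact h
    exact mul_left_cancel₀ hdQ this
  rcases eq_or_lt_of_le (by omega : (1:ℤ) ≤ l') with h1 | h1
  · -- l' = 1, so d = l hence l ∣ m
    rw [← h1, mul_one] at hl'
    rw [hl', hm']
    exact dvd_mul_right _ _
  · -- l' > 1 : contradiction
    exfalso
    obtain ⟨p, hp, hpl'⟩ := (l'.toNat).exists_prime_and_dvd (by omega : l'.toNat ≠ 1)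
    have hpl'' : (p:ℤ) ∣ l' := by
      have := Int.natCast_dvd_natCast.2 hpl'
      rwa [Int.toNat_of_nonneg hl'pos.le] at this
    have hpl : p ∣ l := by
      have : (p:ℤ) ∣ (l:ℤ) := hpl''.trans ⟨(d:ℤ), by rw [hl']; ring⟩
      exact_mod_cast this
    obtain ⟨x, y, hxy⟩ := Int.isCoprime_iff_gcd_eq_one.2 hcop
    obtain ⟨k, hk⟩ := hpl''
    apply hgood p hp hpl
    rw [mem_mulmap]
    refine ⟨k • (x • v + y • u), U.zsmul_mem (U.add_mem (U.zsmul_mem hvU x) (U.zsmul_mem huU y)) k, ?_⟩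
    have hkQ : (l' : ℚ) = (p:ℚ) * (k:ℚ) := by exact_mod_cast congrArg (Int.cast : ℤ → ℚ) hk
    have hxyQ : (x:ℚ) * m' + (y:ℚ) * l' = 1 := by exact_mod_cast congrArg (Int.cast : ℤ → ℚ) hxy
    push_cast [zsmul_eq_mul]
    calc (p:ℚ) * ((k:ℚ) * ((x:ℚ) * v + (y:ℚ) * u))
        = ((x:ℚ) * ((l':ℚ) * v) + (y:ℚ) * ((l':ℚ) * u)) := by rw [hkQ]; ring
      _ = ((x:ℚ) * ((m':ℚ) * u) + (y:ℚ) * ((l':ℚ) * u)) := by rw [heq']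
      _ = ((x:ℚ) * m' + (y:ℚ) * l') * u := by ring
      _ = u := by rw [hxyQ]; ring


set_option maxHeartbeats 1000000 in
/-- if U ≤ ℚ is noncyclic and pU ≠ U for every prime p, then for every
integer l > 1 the quotient U/lU is cyclic of order l. -/
theorem stmt11 (U : AddSubgroup ℚ) (hU : U ≠ ⊥)
    (hnc : ¬ ∃ a : ℚ, U = AddSubgroup.closure {a})
    (hdiv : ∀ p : ℕ, p.Prime → U.map (AddMonoidHom.mulLeft (p : ℚ)) ≠ U)
    (l : ℕ) (hl : 1 < l) :
    Nonempty
      ((U ⧸ ((U.map (AddMonoidHom.mulLeft (l : ℚ))).addSubgroupOf U)) ≃+ ZMod l) := by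
  classical
  have : NeZero l := ⟨by omega⟩
  set lU := U.map (AddMonoidHom.mulLeft (l : ℚ)) with hlU
  set V := lU.addSubgroupOf U with hV
  obtain ⟨u, huU, hu⟩ := exists_good U hdiv l.primeFactors
    (fun p hp => Nat.prime_of_mem_primeFactors hp)
  have hgood : ∀ p : ℕ, p.Prime → p ∣ l → u ∉ U.map (AddMonoidHom.mulLeft (p : ℚ)) :=
    fun p hp hpl => hu p (Nat.mem_primeFactors.2 ⟨hp, hpl, by omega⟩)
  set u₀ : U := ⟨u, huU⟩ with hu₀
  set π : U →+ U ⧸ V := QuotientAddGroup.mk' V with hπ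
  set f : ℤ →+ U ⧸ V := π.comp (zmultiplesHom U u₀) with hf
  have hfl : f (l : ℤ) = 0 := by
    rw [hf]
    simp only [AddMonoidHom.comp_apply, zmultiplesHom_apply]
    rw [hπ, QuotientAddGroup.mk'_apply, QuotientAddGroup.eq_zero_iff]
    rw [hV, AddSubgroup.mem_addSubgroupOf]
    rw [hlU, mem_mulmap]
    refine ⟨u, huU, ?_⟩
    push_cast [hu₀, zsmul_eq_mul]
    ring
  set φ : ZMod l →+ U ⧸ V := ZMod.lift l ⟨f, hfl⟩ with hφ
  have hφcoe : ∀ m : ℤ, φ (m : ZMod l) = π (m • u₀) := by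
    intro m
    rw [hφ, ZMod.lift_coe]
    simp [hf]
  have hinj : Function.Injective φ := by
    rw [injective_iff_map_eq_zero]
    intro x hx
    obtain ⟨m, rfl⟩ := ZMod.intCast_surjective x
    rw [hφcoe, hπ, QuotientAddGroup.mk'_apply, QuotientAddGroup.eq_zero_iff,
      hV, AddSubgroup.mem_addSubgroupOf, hlU, mem_mulmap] at hx
    obtain ⟨v, hvU, hv⟩ := hx
    have hmu : (m : ℚ) * u = (l : ℚ) * v := by
      rw [hv]
      push_cast [hu₀, zsmul_eq_mul]
      ring
    have := key_dvd U l hl u huU hgood m v hvU hmu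
    exact (ZMod.intCast_zmod_eq_zero_iff_dvd m l).2 this
  have hsurj : Function.Surjective φ := by
    intro q
    obtain ⟨w₀, rfl⟩ := QuotientAddGroup.mk'_surjective V q
    set w : ℚ := (w₀ : ℚ) with hw0
    obtain ⟨g, hgcl, ⟨a, ha⟩, ⟨b, hb⟩⟩ := twogen u w
    have hgU : g ∈ U := by
      have hle : AddSubgroup.closure ({u, w} : Set ℚ) ≤ U := by
        rw [AddSubgroup.closure_le]
        intro x hx
        rcases hx with rfl | rfl
        · exact huU
        · exact w₀.2
      exact hle hgcl
    have hga : Int.gcd a l = 1 := by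
      by_contra hne
      obtain ⟨p, hp, hpd⟩ := Nat.exists_prime_and_dvd hne
      have hpa : (p : ℤ) ∣ a := dvd_trans (Int.natCast_dvd_natCast.2 hpd) (Int.gcd_dvd_left a l)
      have hpl : p ∣ l := by
        have h1 : ((Int.gcd a l : ℕ) : ℤ) ∣ (l : ℤ) := Int.gcd_dvd_right a l
        exact hpd.trans (Int.natCast_dvd_natCast.1 h1)
      obtain ⟨a', ha'⟩ := hpa
      apply hgood p hp hpl
      rw [mem_mulmap]
      refine ⟨a' • g, U.zsmul_mem hgU a', ?_⟩
      have haQ : (a : ℚ) = (p : ℚ) * (a' : ℚ) := by exact_mod_cast congrArg (Int.cast : ℤ → ℚ) ha'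
      rw [ha, zsmul_eq_mul, zsmul_eq_mul, haQ]
      ring
    obtain ⟨x, y, hxy⟩ := Int.isCoprime_iff_gcd_eq_one.2 hga
    refine ⟨((b * x : ℤ) : ZMod l), ?_⟩
    rw [hφcoe]
    rw [hπ, QuotientAddGroup.mk'_apply, QuotientAddGroup.mk'_apply,
      QuotientAddGroup.eq]
    rw [hV, AddSubgroup.mem_addSubgroupOf, hlU, mem_mulmap]
    refine ⟨(y * b) • g, U.zsmul_mem hgU _, ?_⟩
    have hxyQ : (x : ℚ) * a + (y : ℚ) * l = 1 := by exact_mod_cast congrArg (Int.cast : ℤ → ℚ) hxy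
    have hcoe : ((-((b * x : ℤ) • u₀) + w₀ : U) : ℚ) = -(((b * x : ℤ)):ℚ) * u + w := by
      push_cast [hu₀, hw0, zsmul_eq_mul]
      ring
    rw [hcoe, ha, hb]
    push_cast [zsmul_eq_mul]
    linear_combination (b:ℚ) * g * hxyQ
  exact ⟨(AddEquiv.ofBijective φ ⟨hinj, hsurj⟩).symm⟩
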